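/- For every real s > 1, the function Q(t) := Q_{s−1}(t) is twice differentiable on (1, ∞) and satisfies the Legendre differential equation there: for all t > 1, (1 − t²)·Q''(t) − 2t·Q'(t) + s·(s−1)·Q(t) = 0. -/

import Mathlib

open MeasureTheory

/-- The Legendre function of the second kind `Q_{s−1}(t)`, defined for `s > 1`, `t > 1` by
`Q_{s−1}(t) := ∫₀^∞ (t + √(t²−1)·cosh v)^(−s) dv`. -/
noncomputable def legendreQ (s t : ℝ) : ℝ :=
  ∫ v in Set.Ioi (0 : ℝ), (t + Real.sqrt (t ^ 2 - 1) * Real.cosh v) ^ (-s)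

section LegendreAux

open Real Set Filter

noncomputable def lF (s t v : ℝ) : ℝ := (t + Real.sqrt (t ^ 2 - 1) * Real.cosh v) ^ (-s)

noncomputable def lF1 (s t v : ℝ) : ℝ :=
  (1 + t / Real.sqrt (t ^ 2 - 1) * Real.cosh v) * -s
    * (t + Real.sqrt (t ^ 2 - 1) * Real.cosh v) ^ (-s - 1)

noncomputable def lF2 (s t v : ℝ) : ℝ :=
  (1 * Real.sqrt (t ^ 2 - 1) - t * (t / Real.sqrt (t ^ 2 - 1))) / Real.sqrt (t ^ 2 - 1) ^ 2
      * Real.cosh v * -s * (t + Real.sqrt (t ^ 2 - 1) * Real.cosh v) ^ (-s - 1)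
  + (1 + t / Real.sqrt (t ^ 2 - 1) * Real.cosh v) * -s
    * ((1 + t / Real.sqrt (t ^ 2 - 1) * Real.cosh v) * (-s - 1)
      * (t + Real.sqrt (t ^ 2 - 1) * Real.cosh v) ^ (-s - 1 - 1))

lemma lw_pos {t : ℝ} (ht : 1 < t) : 0 < Real.sqrt (t ^ 2 - 1) :=
  Real.sqrt_pos.mpr (by nlinarith)

lemma lw_sq {t : ℝ} (ht : 1 < t) : Real.sqrt (t ^ 2 - 1) ^ 2 = t ^ 2 - 1 :=
  Real.sq_sqrt (by nlinarith)

lemma lu_pos {t : ℝ} (ht : 1 < t) (v : ℝ) : 0 < t + Real.sqrt (t ^ 2 - 1) * Real.cosh v := by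
  have := lw_pos ht
  have := Real.cosh_pos (x := v)
  nlinarith

lemma lu_ge {t : ℝ} (ht : 1 < t) (v : ℝ) :
    Real.sqrt (t ^ 2 - 1) / 2 * Real.exp v ≤ t + Real.sqrt (t ^ 2 - 1) * Real.cosh v := by
  have hw := lw_pos ht
  have h1 : Real.exp v / 2 ≤ Real.cosh v := by
    rw [Real.cosh_eq]; have := (Real.exp_pos (-v)).le; linarith
  nlinarith [Real.exp_pos v]

lemma ut_pos {t : ℝ} (ht : 1 < t) (v : ℝ) :
    0 < 1 + t / Real.sqrt (t ^ 2 - 1) * Real.cosh v := by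
  have hw := lw_pos ht
  have hc := Real.cosh_pos (x := v)
  have : 0 < t / Real.sqrt (t ^ 2 - 1) := div_pos (by linarith) hw
  nlinarith

lemma hasDerivAt_lw {t : ℝ} (ht : 1 < t) :
    HasDerivAt (fun t => Real.sqrt (t ^ 2 - 1)) (t / Real.sqrt (t ^ 2 - 1)) t := by
  have h : HasDerivAt (fun t : ℝ => t ^ 2 - 1) (2 * t) t := by
    simpa using (hasDerivAt_pow 2 t).sub_const 1
  have h2 := h.sqrt (by nlinarith : t ^ 2 - 1 ≠ 0)
  convert h2 using 1
  rw [mul_div_mul_left _ _ (two_ne_zero)]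

lemma hasDerivAt_lu {t : ℝ} (ht : 1 < t) (v : ℝ) :
    HasDerivAt (fun t => t + Real.sqrt (t ^ 2 - 1) * Real.cosh v)
      (1 + t / Real.sqrt (t ^ 2 - 1) * Real.cosh v) t :=
  (hasDerivAt_id t).add ((hasDerivAt_lw ht).mul_const _)

lemma hasDerivAt_ut {t : ℝ} (ht : 1 < t) (v : ℝ) :
    HasDerivAt (fun t => 1 + t / Real.sqrt (t ^ 2 - 1) * Real.cosh v)
      (((1 * Real.sqrt (t ^ 2 - 1) - t * (t / Real.sqrt (t ^ 2 - 1))) / Real.sqrt (t ^ 2 - 1) ^ 2)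
        * Real.cosh v) t :=
  (((hasDerivAt_id t).div (hasDerivAt_lw ht) (lw_pos ht).ne').mul_const _).const_add 1

lemma hasDerivAt_lF {s t : ℝ} (ht : 1 < t) (v : ℝ) :
    HasDerivAt (fun t => lF s t v) (lF1 s t v) t := by
  have h := (hasDerivAt_lu ht v).rpow_const (p := -s) (Or.inl (lu_pos ht v).ne')
  exact h

lemma hasDerivAt_lF1 {s t : ℝ} (ht : 1 < t) (v : ℝ) :
    HasDerivAt (fun t => lF1 s t v) (lF2 s t v) t := by
  have hg := (hasDerivAt_lu ht v).rpow_const (p := -s - 1) (Or.inl (lu_pos ht v).ne')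
  exact ((hasDerivAt_ut ht v).mul_const (-s)).mul hg

section
variable {s a b t v p : ℝ}

lemma cosh_le_exp (hv : 0 ≤ v) : Real.cosh v ≤ Real.exp v := by
  rw [Real.cosh_eq]
  have h := Real.exp_le_exp.mpr (neg_le_self hv)
  linarith

lemma rpow_u_le (ha : 1 < a) (hat : a ≤ t) (hv : 0 ≤ v) (hp : p ≤ 0) :
    (t + Real.sqrt (t ^ 2 - 1) * Real.cosh v) ^ p
      ≤ (Real.sqrt (a ^ 2 - 1) / 2) ^ p * Real.exp (p * v) := by
  have hta : 1 < t := lt_of_lt_of_le ha hat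
  have hwa := lw_pos ha
  have hW : Real.sqrt (a ^ 2 - 1) ≤ Real.sqrt (t ^ 2 - 1) :=
    Real.sqrt_le_sqrt (by nlinarith)
  have h1 : Real.sqrt (a ^ 2 - 1) / 2 * Real.exp v
      ≤ t + Real.sqrt (t ^ 2 - 1) * Real.cosh v := by
    refine le_trans ?_ (lu_ge hta v)
    have := Real.exp_pos v
    nlinarith
  have h0 : 0 < Real.sqrt (a ^ 2 - 1) / 2 * Real.exp v :=
    mul_pos (by linarith) (Real.exp_pos v)
  calc (t + Real.sqrt (t ^ 2 - 1) * Real.cosh v) ^ p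
      ≤ (Real.sqrt (a ^ 2 - 1) / 2 * Real.exp v) ^ p :=
        Real.rpow_le_rpow_of_nonpos h0 h1 hp
    _ = (Real.sqrt (a ^ 2 - 1) / 2) ^ p * (Real.exp v) ^ p :=
        Real.mul_rpow (by linarith) (Real.exp_pos v).le
    _ = (Real.sqrt (a ^ 2 - 1) / 2) ^ p * Real.exp (p * v) := by
        rw [← Real.exp_mul, mul_comm v p]

lemma ut_le (ha : 1 < a) (hat : a ≤ t) (htb : t ≤ b) (hv : 0 ≤ v) :
    1 + t / Real.sqrt (t ^ 2 - 1) * Real.cosh v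
      ≤ (1 + b / Real.sqrt (a ^ 2 - 1)) * Real.exp v := by
  have hta : 1 < t := lt_of_lt_of_le ha hat
  have hwa := lw_pos ha
  have hwt := lw_pos hta
  have hW : Real.sqrt (a ^ 2 - 1) ≤ Real.sqrt (t ^ 2 - 1) :=
    Real.sqrt_le_sqrt (by nlinarith)
  have h1 : t / Real.sqrt (t ^ 2 - 1) ≤ b / Real.sqrt (a ^ 2 - 1) :=
    div_le_div₀ (by linarith) htb hwa hW
  have h2 := cosh_le_exp hv
  have h3 := Real.one_le_exp hv
  have h4 := Real.cosh_pos (x := v)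
  have h5 : 0 ≤ t / Real.sqrt (t ^ 2 - 1) := by positivity
  nlinarith

end

section
variable {s a b t v : ℝ}

lemma bound_F (hs : 0 < s) (ha : 1 < a) (hat : a ≤ t) (hv : 0 ≤ v) :
    |lF s t v| ≤ (Real.sqrt (a ^ 2 - 1) / 2) ^ (-s) * Real.exp (-s * v) := by
  have hta : 1 < t := lt_of_lt_of_le ha hat
  rw [lF, abs_of_nonneg (Real.rpow_nonneg (lu_pos hta v).le _)]
  exact rpow_u_le ha hat hv (by linarith)

lemma bound_F1 (hs : 0 < s) (ha : 1 < a) (hat : a ≤ t) (htb : t ≤ b) (hv : 0 ≤ v) :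
    |lF1 s t v| ≤ (1 + b / Real.sqrt (a ^ 2 - 1)) * s
      * (Real.sqrt (a ^ 2 - 1) / 2) ^ (-s - 1) * Real.exp (-s * v) := by
  have hta : 1 < t := lt_of_lt_of_le ha hat
  have hwa := lw_pos ha
  have hut := ut_pos hta v
  have hupow : (0:ℝ) ≤ (t + Real.sqrt (t ^ 2 - 1) * Real.cosh v) ^ (-s - 1) :=
    Real.rpow_nonneg (lu_pos hta v).le _
  have heq : lF1 s t v = -((1 + t / Real.sqrt (t ^ 2 - 1) * Real.cosh v) * s
      * (t + Real.sqrt (t ^ 2 - 1) * Real.cosh v) ^ (-s - 1)) := by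
    rw [lF1]; ring
  rw [heq, abs_neg, abs_of_nonneg (by positivity)]
  have h1 := rpow_u_le ha hat hv (p := -s - 1) (by linarith)
  have h2 := ut_le ha hat htb hv
  calc (1 + t / Real.sqrt (t ^ 2 - 1) * Real.cosh v) * s
      * (t + Real.sqrt (t ^ 2 - 1) * Real.cosh v) ^ (-s - 1)
      ≤ ((1 + b / Real.sqrt (a ^ 2 - 1)) * Real.exp v) * s
        * ((Real.sqrt (a ^ 2 - 1) / 2) ^ (-s - 1) * Real.exp ((-s - 1) * v)) := by
        have hb0 : (0:ℝ) < 1 + b / Real.sqrt (a ^ 2 - 1) := by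
          have : (0:ℝ) < b / Real.sqrt (a ^ 2 - 1) := div_pos (by linarith) hwa
          linarith
        gcongr
    _ = (1 + b / Real.sqrt (a ^ 2 - 1)) * s * (Real.sqrt (a ^ 2 - 1) / 2) ^ (-s - 1)
        * (Real.exp v * Real.exp ((-s - 1) * v)) := by ring
    _ = (1 + b / Real.sqrt (a ^ 2 - 1)) * s * (Real.sqrt (a ^ 2 - 1) / 2) ^ (-s - 1)
        * Real.exp (-s * v) := by rw [← Real.exp_add]; ring_nf

lemma lF2_eq (hs : 0 < s) {t : ℝ} (ht : 1 < t) (v : ℝ) :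
    lF2 s t v = 1 / Real.sqrt (t ^ 2 - 1) ^ 3 * Real.cosh v * s
        * (t + Real.sqrt (t ^ 2 - 1) * Real.cosh v) ^ (-s - 1)
      + (1 + t / Real.sqrt (t ^ 2 - 1) * Real.cosh v) ^ 2 * (s * (s + 1))
        * (t + Real.sqrt (t ^ 2 - 1) * Real.cosh v) ^ (-s - 1 - 1) := by
  have hW := lw_pos ht
  have hW2 := lw_sq ht
  have e1 : (1 * Real.sqrt (t ^ 2 - 1) - t * (t / Real.sqrt (t ^ 2 - 1)))
      / Real.sqrt (t ^ 2 - 1) ^ 2 = -1 / Real.sqrt (t ^ 2 - 1) ^ 3 := by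
    rw [div_eq_div_iff (by positivity : (0:ℝ) < Real.sqrt (t^2-1)^2).ne'
      (by positivity : (0:ℝ) < Real.sqrt (t^2-1)^3).ne']
    field_simp
    linear_combination hW2
  rw [lF2, e1]; ring

lemma bound_F2 (hs : 0 < s) (ha : 1 < a) (hat : a ≤ t) (htb : t ≤ b) (hv : 0 ≤ v) :
    |lF2 s t v| ≤ (1 / Real.sqrt (a ^ 2 - 1) ^ 3 * s * (Real.sqrt (a ^ 2 - 1) / 2) ^ (-s - 1)
      + (1 + b / Real.sqrt (a ^ 2 - 1)) ^ 2 * (s * (s + 1))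
        * (Real.sqrt (a ^ 2 - 1) / 2) ^ (-s - 1 - 1)) * Real.exp (-s * v) := by
  have hta : 1 < t := lt_of_lt_of_le ha hat
  have hwa := lw_pos ha
  have hwt := lw_pos hta
  have hW : Real.sqrt (a ^ 2 - 1) ≤ Real.sqrt (t ^ 2 - 1) :=
    Real.sqrt_le_sqrt (by nlinarith)
  have hut := ut_pos hta v
  have hC := Real.cosh_pos (x := v)
  have h1 := rpow_u_le ha hat hv (p := -s - 1) (by linarith)
  have h2 := rpow_u_le ha hat hv (p := -s - 1 - 1) (by linarith)
  have h3 := ut_le ha hat htb hv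
  have h4 := cosh_le_exp hv
  rw [lF2_eq hs hta v, abs_of_nonneg (by positivity)]
  calc 1 / Real.sqrt (t ^ 2 - 1) ^ 3 * Real.cosh v * s
        * (t + Real.sqrt (t ^ 2 - 1) * Real.cosh v) ^ (-s - 1)
      + (1 + t / Real.sqrt (t ^ 2 - 1) * Real.cosh v) ^ 2 * (s * (s + 1))
        * (t + Real.sqrt (t ^ 2 - 1) * Real.cosh v) ^ (-s - 1 - 1)
      ≤ 1 / Real.sqrt (a ^ 2 - 1) ^ 3 * Real.exp v * s
        * ((Real.sqrt (a ^ 2 - 1) / 2) ^ (-s - 1) * Real.exp ((-s - 1) * v))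
      + ((1 + b / Real.sqrt (a ^ 2 - 1)) * Real.exp v) ^ 2 * (s * (s + 1))
        * ((Real.sqrt (a ^ 2 - 1) / 2) ^ (-s - 1 - 1) * Real.exp ((-s - 1 - 1) * v)) := by
        have hb0 : (0:ℝ) < 1 + b / Real.sqrt (a ^ 2 - 1) := by
          have : (0:ℝ) < b / Real.sqrt (a ^ 2 - 1) := div_pos (by linarith) hwa
          linarith
        gcongr
    _ = 1 / Real.sqrt (a ^ 2 - 1) ^ 3 * s * (Real.sqrt (a ^ 2 - 1) / 2) ^ (-s - 1)
        * (Real.exp v * Real.exp ((-s - 1) * v))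
      + (1 + b / Real.sqrt (a ^ 2 - 1)) ^ 2 * (s * (s + 1))
        * (Real.sqrt (a ^ 2 - 1) / 2) ^ (-s - 1 - 1)
        * (Real.exp v * Real.exp v * Real.exp ((-s - 1 - 1) * v)) := by ring
    _ = _ := by simp only [← Real.exp_add]; ring_nf

end

section
variable {s t : ℝ}

lemma cont_lu (t : ℝ) : Continuous (fun v => t + Real.sqrt (t ^ 2 - 1) * Real.cosh v) :=
  continuous_const.add (continuous_const.mul Real.continuous_cosh)

lemma cont_upow (ht : 1 < t) (p : ℝ) :
    Continuous (fun v => (t + Real.sqrt (t ^ 2 - 1) * Real.cosh v) ^ p) :=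
  (cont_lu t).rpow_const (fun v => Or.inl (lu_pos ht v).ne')

lemma cont_lF (s : ℝ) (ht : 1 < t) : Continuous (lF s t) := cont_upow ht (-s)

lemma cont_lF1 (s : ℝ) (ht : 1 < t) : Continuous (lF1 s t) :=
  ((continuous_const.add (continuous_const.mul Real.continuous_cosh)).mul continuous_const).mul
    (cont_upow ht _)

lemma cont_lF2 (s : ℝ) (ht : 1 < t) : Continuous (lF2 s t) := by
  apply Continuous.add
  · exact ((continuous_const.mul Real.continuous_cosh).mul continuous_const).mul (cont_upow ht _)
  · exact ((continuous_const.add (continuous_const.mul Real.continuous_cosh)).mul continuous_const).mul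
      (((continuous_const.add (continuous_const.mul Real.continuous_cosh)).mul continuous_const).mul
        (cont_upow ht _))

lemma int_bound (hs : 0 < s) (C : ℝ) :
    IntegrableOn (fun v => C * Real.exp (-s * v)) (Ioi (0:ℝ)) :=
  (exp_neg_integrableOn_Ioi 0 hs).const_mul C

lemma intOn_of_bound {f : ℝ → ℝ} (hs : 0 < s) (hf : Continuous f) {C : ℝ}
    (hb : ∀ v : ℝ, 0 ≤ v → |f v| ≤ C * Real.exp (-s * v)) :
    IntegrableOn f (Ioi (0:ℝ)) := by
  refine Integrable.mono' (int_bound hs C) hf.aestronglyMeasurable ?_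
  refine (ae_restrict_iff' measurableSet_Ioi).mpr (ae_of_all _ fun v hv => ?_)
  simpa [Real.norm_eq_abs] using hb v (le_of_lt hv)

lemma intF (hs : 0 < s) (ht : 1 < t) : IntegrableOn (lF s t) (Ioi (0:ℝ)) :=
  intOn_of_bound hs (cont_lF s ht) (fun v hv => bound_F hs ht le_rfl hv)

lemma intF1 (hs : 0 < s) (ht : 1 < t) : IntegrableOn (lF1 s t) (Ioi (0:ℝ)) :=
  intOn_of_bound hs (cont_lF1 s ht) (fun v hv => bound_F1 hs ht le_rfl le_rfl hv)

lemma intF2 (hs : 0 < s) (ht : 1 < t) : IntegrableOn (lF2 s t) (Ioi (0:ℝ)) :=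
  intOn_of_bound hs (cont_lF2 s ht) (fun v hv => bound_F2 hs ht le_rfl le_rfl hv)

lemma lball_sub {t₀ : ℝ} (ht : 1 < t₀) {x : ℝ} (hx : x ∈ Metric.ball t₀ ((t₀ - 1) / 2)) :
    (t₀ + 1) / 2 ≤ x ∧ x ≤ t₀ + (t₀ - 1) / 2 := by
  rw [Metric.mem_ball, Real.dist_eq, abs_lt] at hx
  constructor <;> linarith [hx.1, hx.2]

lemma hasDeriv_int1 (hs : 0 < s) {t₀ : ℝ} (ht : 1 < t₀) :
    HasDerivAt (fun x => ∫ v in Ioi (0:ℝ), lF s x v) (∫ v in Ioi (0:ℝ), lF1 s t₀ v) t₀ := by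
  have ha : (1:ℝ) < (t₀ + 1) / 2 := by linarith
  have h := hasDerivAt_integral_of_dominated_loc_of_deriv_le
    (F := fun x v => lF s x v) (F' := fun x v => lF1 s x v)
    (μ := volume.restrict (Ioi (0:ℝ))) (x₀ := t₀)
    (bound := fun v => (1 + (t₀ + (t₀ - 1) / 2) / Real.sqrt (((t₀ + 1) / 2) ^ 2 - 1)) * s
      * (Real.sqrt (((t₀ + 1) / 2) ^ 2 - 1) / 2) ^ (-s - 1) * Real.exp (-s * v))
    (Metric.ball_mem_nhds t₀ (by linarith : (0:ℝ) < (t₀ - 1) / 2))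
    ?_ (intF hs ht) (cont_lF1 s ht).aestronglyMeasurable ?_ ?_ ?_
  · exact h.2
  · filter_upwards [isOpen_Ioi.mem_nhds (show t₀ ∈ Ioi (1:ℝ) from ht)] with x hx
    exact (cont_lF s hx).aestronglyMeasurable
  · refine (ae_restrict_iff' measurableSet_Ioi).mpr (ae_of_all _ fun v hv x hx => ?_)
    obtain ⟨h1, h2⟩ := lball_sub ht hx
    exact bound_F1 hs ha h1 h2 (le_of_lt hv)
  · exact (int_bound hs _)
  · refine ae_of_all _ fun v x hx => ?_
    obtain ⟨h1, h2⟩ := lball_sub ht hx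
    exact hasDerivAt_lF (by linarith) v

lemma hasDeriv_int2 (hs : 0 < s) {t₀ : ℝ} (ht : 1 < t₀) :
    HasDerivAt (fun x => ∫ v in Ioi (0:ℝ), lF1 s x v) (∫ v in Ioi (0:ℝ), lF2 s t₀ v) t₀ := by
  have ha : (1:ℝ) < (t₀ + 1) / 2 := by linarith
  have h := hasDerivAt_integral_of_dominated_loc_of_deriv_le
    (F := fun x v => lF1 s x v) (F' := fun x v => lF2 s x v)
    (μ := volume.restrict (Ioi (0:ℝ))) (x₀ := t₀)
    (bound := fun v => (1 / Real.sqrt (((t₀ + 1) / 2) ^ 2 - 1) ^ 3 * s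
        * (Real.sqrt (((t₀ + 1) / 2) ^ 2 - 1) / 2) ^ (-s - 1)
      + (1 + (t₀ + (t₀ - 1) / 2) / Real.sqrt (((t₀ + 1) / 2) ^ 2 - 1)) ^ 2 * (s * (s + 1))
        * (Real.sqrt (((t₀ + 1) / 2) ^ 2 - 1) / 2) ^ (-s - 1 - 1)) * Real.exp (-s * v))
    (Metric.ball_mem_nhds t₀ (by linarith : (0:ℝ) < (t₀ - 1) / 2))
    ?_ (intF1 hs ht) (cont_lF2 s ht).aestronglyMeasurable ?_ ?_ ?_
  · exact h.2
  · filter_upwards [isOpen_Ioi.mem_nhds (show t₀ ∈ Ioi (1:ℝ) from ht)] with x hx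
    exact (cont_lF1 s hx).aestronglyMeasurable
  · refine (ae_restrict_iff' measurableSet_Ioi).mpr (ae_of_all _ fun v hv x hx => ?_)
    obtain ⟨h1, h2⟩ := lball_sub ht hx
    exact bound_F2 hs ha h1 h2 (le_of_lt hv)
  · exact (int_bound hs _)
  · refine ae_of_all _ fun v x hx => ?_
    obtain ⟨h1, h2⟩ := lball_sub ht hx
    exact hasDerivAt_lF1 (by linarith) v

end


lemma poly_id (s t W C S U A : ℝ) (hW : 0 < W) (hW2 : W ^ 2 = t ^ 2 - 1) (hU : U = t + W * C)
    (hS : S ^ 2 = C ^ 2 - 1) :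
    (1 - t ^ 2) * ((1 * W - t * (t / W)) / W ^ 2 * C * -s * (A * U)
        + (1 + t / W * C) * -s * ((1 + t / W * C) * (-s - 1) * A))
      - 2 * t * ((1 + t / W * C) * -s * (A * U)) + s * (s - 1) * (A * U * U)
    = s / W * (C * (A * U) + S * ((W * S) * (-s - 1) * A)) := by
  subst hU
  have hW0 : W ≠ 0 := hW.ne'
  field_simp
  ring_nf
  linear_combination (s*A*(-2*W^2*C*(t+W*C) - W^3*(s+1)*(1-C^2) + C*(t+W*C)
      - (W^2+1-t^2)*C*(t+W*C) + W*(W+t*C)^2*(s+1) + W^2*C*(t+W*C))) * hW2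
    + (s*A*W^3*(s+1)) * hS

noncomputable def lG (s t v : ℝ) : ℝ :=
  s / Real.sqrt (t ^ 2 - 1)
    * (Real.sinh v * (t + Real.sqrt (t ^ 2 - 1) * Real.cosh v) ^ (-s - 1))

noncomputable def lGd (s t v : ℝ) : ℝ :=
  s / Real.sqrt (t ^ 2 - 1)
    * (Real.cosh v * (t + Real.sqrt (t ^ 2 - 1) * Real.cosh v) ^ (-s - 1)
      + Real.sinh v * (Real.sqrt (t ^ 2 - 1) * Real.sinh v * (-s - 1)
        * (t + Real.sqrt (t ^ 2 - 1) * Real.cosh v) ^ (-s - 1 - 1)))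


section
variable {s t : ℝ}

lemma hasDerivAt_lG (ht : 1 < t) (v : ℝ) : HasDerivAt (lG s t) (lGd s t v) v := by
  have hu : HasDerivAt (fun v => t + Real.sqrt (t ^ 2 - 1) * Real.cosh v)
      (Real.sqrt (t ^ 2 - 1) * Real.sinh v) v :=
    ((Real.hasDerivAt_cosh v).const_mul _).const_add t
  have hup := hu.rpow_const (p := -s - 1) (Or.inl (lu_pos ht v).ne')
  exact ((Real.hasDerivAt_sinh v).mul hup).const_mul (s / Real.sqrt (t ^ 2 - 1))

lemma lODE_pointwise (ht : 1 < t) (v : ℝ) :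
    (1 - t ^ 2) * lF2 s t v - 2 * t * lF1 s t v + s * (s - 1) * lF s t v = lGd s t v := by
  have hU := lu_pos ht v
  have e2 : (t + Real.sqrt (t ^ 2 - 1) * Real.cosh v) ^ (-s - 1)
      = (t + Real.sqrt (t ^ 2 - 1) * Real.cosh v) ^ (-s - 1 - 1)
        * (t + Real.sqrt (t ^ 2 - 1) * Real.cosh v) := by
    conv_lhs => rw [show (-s - 1) = (-s - 1 - 1) + 1 by ring]
    rw [Real.rpow_add hU, Real.rpow_one]
  have e1 : (t + Real.sqrt (t ^ 2 - 1) * Real.cosh v) ^ (-s)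
      = (t + Real.sqrt (t ^ 2 - 1) * Real.cosh v) ^ (-s - 1 - 1)
        * (t + Real.sqrt (t ^ 2 - 1) * Real.cosh v)
        * (t + Real.sqrt (t ^ 2 - 1) * Real.cosh v) := by
    conv_lhs => rw [show (-s) = (-s - 1 - 1) + 1 + 1 by ring]
    rw [Real.rpow_add hU, Real.rpow_add hU, Real.rpow_one]
  simp only [lF, lF1, lF2, lGd]
  rw [e1, e2]
  exact poly_id s t _ _ _ _ _ (lw_pos ht) (lw_sq ht) rfl (Real.sinh_sq v)

lemma lG_tendsto (hs : 0 < s) (ht : 1 < t) : Tendsto (lG s t) atTop (nhds 0) := by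
  have hW := lw_pos ht
  have hlim : Tendsto (fun v : ℝ => s / Real.sqrt (t ^ 2 - 1)
      * (Real.sqrt (t ^ 2 - 1) / 2) ^ (-s - 1) * Real.exp (-s * v)) atTop (nhds 0) := by
    have h1 : Tendsto (fun v : ℝ => s * v) atTop atTop :=
      Tendsto.const_mul_atTop hs tendsto_id
    have h2 : Tendsto (fun v : ℝ => Real.exp (-(s * v))) atTop (nhds 0) :=
      Real.tendsto_exp_neg_atTop_nhds_zero.comp h1
    have h3 := h2.const_mul (s / Real.sqrt (t ^ 2 - 1)
      * (Real.sqrt (t ^ 2 - 1) / 2) ^ (-s - 1))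
    simpa [neg_mul, mul_zero] using h3
  refine tendsto_of_tendsto_of_tendsto_of_le_of_le' tendsto_const_nhds hlim ?_ ?_
  · filter_upwards [eventually_ge_atTop (0:ℝ)] with v hv
    have := Real.sinh_nonneg_iff.mpr hv
    have := (Real.rpow_nonneg (lu_pos ht v).le (-s - 1))
    have : (0:ℝ) ≤ s / Real.sqrt (t ^ 2 - 1) := by positivity
    simp only [lG]
    positivity
  · filter_upwards [eventually_ge_atTop (0:ℝ)] with v hv
    have h1 := rpow_u_le ht le_rfl hv (p := -s - 1) (by linarith)
    have h2 : Real.sinh v ≤ Real.exp v := le_trans (Real.sinh_lt_cosh (x := v)).le (cosh_le_exp hv)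
    have h3 : 0 ≤ Real.sinh v := Real.sinh_nonneg_iff.mpr hv
    have h4 : (0:ℝ) < s / Real.sqrt (t ^ 2 - 1) := by positivity
    have h5 : (0:ℝ) ≤ (t + Real.sqrt (t ^ 2 - 1) * Real.cosh v) ^ (-s - 1) :=
      Real.rpow_nonneg (lu_pos ht v).le _
    calc lG s t v ≤ s / Real.sqrt (t ^ 2 - 1)
        * (Real.exp v * ((Real.sqrt (t ^ 2 - 1) / 2) ^ (-s - 1) * Real.exp ((-s - 1) * v))) := by
          rw [lG]
          gcongr
      _ = s / Real.sqrt (t ^ 2 - 1) * (Real.sqrt (t ^ 2 - 1) / 2) ^ (-s - 1)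
          * (Real.exp v * Real.exp ((-s - 1) * v)) := by ring
      _ = _ := by simp only [← Real.exp_add]; ring_nf

lemma integral_lGd (hs : 0 < s) (ht : 1 < t) : ∫ v in Ioi (0:ℝ), lGd s t v = 0 := by
  have hint : IntegrableOn (lGd s t) (Ioi (0:ℝ)) := by
    refine (((((intF2 hs ht).const_mul (1 - t ^ 2)).sub
      ((intF1 hs ht).const_mul (2 * t))).add
      ((intF hs ht).const_mul (s * (s - 1)))).congr ?_)
    exact ae_of_all _ fun v => lODE_pointwise ht v
  have h := integral_Ioi_of_hasDerivAt_of_tendsto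
    (f := lG s t) (f' := lGd s t) (a := 0)
    (hasDerivAt_lG ht 0).continuousAt.continuousWithinAt
    (fun x _ => hasDerivAt_lG ht x) hint (lG_tendsto hs ht)
  simpa [lG] using h

lemma integral_identity (hs : 0 < s) (ht : 1 < t) :
    (1 - t ^ 2) * (∫ v in Ioi (0:ℝ), lF2 s t v) - 2 * t * (∫ v in Ioi (0:ℝ), lF1 s t v)
      + s * (s - 1) * (∫ v in Ioi (0:ℝ), lF s t v) = 0 := by
  have h1 := intF hs ht
  have h2 := intF1 hs ht
  have h3 := intF2 hs ht
  have hsub : Integrable (fun v => (1 - t ^ 2) * lF2 s t v - 2 * t * lF1 s t v)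
      (volume.restrict (Ioi (0:ℝ))) := (h3.const_mul _).sub (h2.const_mul _)
  have e : ∫ v in Ioi (0:ℝ),
      ((1 - t ^ 2) * lF2 s t v - 2 * t * lF1 s t v + s * (s - 1) * lF s t v)
      = (1 - t ^ 2) * (∫ v in Ioi (0:ℝ), lF2 s t v)
        - 2 * t * (∫ v in Ioi (0:ℝ), lF1 s t v)
        + s * (s - 1) * (∫ v in Ioi (0:ℝ), lF s t v) := by
    rw [integral_add hsub (h1.const_mul _), integral_sub (h3.const_mul _) (h2.const_mul _),
      integral_const_mul, integral_const_mul, integral_const_mul]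
  rw [← e, integral_congr_ae (ae_of_all _ fun v => lODE_pointwise ht v), integral_lGd hs ht]

end

end LegendreAux

/-- For every real `s > 1`, the function `Q(t) := Q_{s−1}(t)` is twice
differentiable on `(1, ∞)` and satisfies the Legendre differential equation there:
for all `t > 1`, `(1 − t²)·Q''(t) − 2t·Q'(t) + s·(s−1)·Q(t) = 0`. -/
theorem legendreQ_ODE (s : ℝ) (hs : 1 < s) :
    ∀ t : ℝ, 1 < t →
      DifferentiableAt ℝ (legendreQ s) t ∧
      DifferentiableAt ℝ (deriv (legendreQ s)) t ∧
      (1 - t ^ 2) * deriv (deriv (legendreQ s)) t - 2 * t * deriv (legendreQ s) t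
        + s * (s - 1) * legendreQ s t = 0 := by
  intro t ht
  have hs0 : 0 < s := by linarith
  have hfun : legendreQ s = fun x => ∫ v in Set.Ioi (0:ℝ), lF s x v := funext fun x => rfl
  have key1 : ∀ x : ℝ, 1 < x →
      HasDerivAt (legendreQ s) (∫ v in Set.Ioi (0:ℝ), lF1 s x v) x := by
    intro x hx
    rw [hfun]
    exact hasDeriv_int1 hs0 hx
  have hd1 : DifferentiableAt ℝ (legendreQ s) t := (key1 t ht).differentiableAt
  have hev : deriv (legendreQ s) =ᶠ[nhds t] (fun x => ∫ v in Set.Ioi (0:ℝ), lF1 s x v) := by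
    filter_upwards [isOpen_Ioi.mem_nhds (show t ∈ Set.Ioi (1:ℝ) from ht)] with x hx
    exact (key1 x hx).deriv
  have key2 := hasDeriv_int2 (s := s) hs0 ht
  have hd2 : DifferentiableAt ℝ (deriv (legendreQ s)) t :=
    key2.differentiableAt.congr_of_eventuallyEq hev
  refine ⟨hd1, hd2, ?_⟩
  have e1 : deriv (legendreQ s) t = ∫ v in Set.Ioi (0:ℝ), lF1 s t v := (key1 t ht).deriv
  have e2 : deriv (deriv (legendreQ s)) t = ∫ v in Set.Ioi (0:ℝ), lF2 s t v := by
    rw [Filter.EventuallyEq.deriv_eq hev]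
    exact key2.deriv
  have e0 : legendreQ s t = ∫ v in Set.Ioi (0:ℝ), lF s t v := rfl
  rw [e0, e1, e2]
  exact integral_identity hs0 ht
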